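/- arXiv:2209.06698 — 3 statements merged into one kernel-verified Lean document; each statement's English description precedes it below -/
import Mathlib

section
/- Let S be a Salem polynomial of degree 2n with |S(1) · S(-1)| = 1. Then n is odd. -/
open Polynomial Finset

/-- A Salem polynomial: a monic irreducible palindromic polynomial in `ℤ[X]` of even
degree `≥ 2`, having a real root `α > 1` and such that every complex root off the unit
circle is `α` or `α⁻¹` (both positive real numbers). -/
def IsSalemPoly (S : Polynomial ℤ) : Prop :=
  S.Monic ∧ Irreducible S ∧ 2 ≤ S.natDegree ∧ Even S.natDegree ∧
  (∀ i ≤ S.natDegree, S.coeff i = S.coeff (S.natDegree - i)) ∧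
  ∃ α : ℝ, 1 < α ∧ Polynomial.aeval α S = 0 ∧
    ∀ z : ℂ, Polynomial.aeval z S = 0 → ‖z‖ ≠ 1 →
      (z = (α : ℂ) ∨ z = ((α⁻¹ : ℝ) : ℂ))


lemma exists_root_gt {p : Polynomial ℝ} (hl : 0 < p.leadingCoeff) (hd : 0 < p.degree)
    (b : ℝ) (hb : p.eval b < 0) : ∃ r, b < r ∧ p.eval r = 0 := by
  have htop := p.tendsto_atTop_of_leadingCoeff_nonneg hd hl.le
  have h1 : ∀ᶠ x in Filter.atTop, 0 < p.eval x := htop.eventually_gt_atTop 0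
  have h2 : ∀ᶠ x : ℝ in Filter.atTop, b < x := Filter.eventually_gt_atTop b
  obtain ⟨M, hM0, hMb⟩ := (h1.and h2).exists
  have hcont : ContinuousOn (fun x => p.eval x) (Set.Icc b M) :=
    (p.continuous_aeval).continuousOn
  obtain ⟨r, hrmem, hr0⟩ := intermediate_value_Ioo hMb.le hcont ⟨hb, hM0⟩
  exact ⟨r, hrmem.1, hr0⟩



lemma pal_dvd_four {S : Polynomial ℤ} {n : ℕ}
    (hpal : ∀ i ≤ S.natDegree, S.coeff i = S.coeff (S.natDegree - i))
    (hdeg : S.natDegree = 2 * n) (hn : Even n) :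
    (4 : ℤ) ∣ S.eval 1 - S.eval (-1) := by
  have h1 : S.eval 1 = ∑ i ∈ range (2 * n + 1), S.coeff i := by
    rw [eval_eq_sum_range, hdeg]; simp
  have h2 : S.eval (-1) = ∑ i ∈ range (2 * n + 1), S.coeff i * (-1) ^ i := by
    rw [eval_eq_sum_range, hdeg]
  have key : S.eval 1 - S.eval (-1)
      = 2 * ∑ i ∈ (range (2 * n + 1)).filter (fun i => Odd i), S.coeff i := by
    rw [h1, h2, ← Finset.sum_sub_distrib, Finset.mul_sum, Finset.sum_filter]
    refine Finset.sum_congr rfl fun i _ => ?_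
    by_cases hi : Odd i
    · rw [if_pos hi, hi.neg_one_pow]; ring
    · rw [if_neg hi, (Nat.not_odd_iff_even.mp hi).neg_one_pow]; ring
  have hT : (2 : ℤ) ∣ ∑ i ∈ (range (2 * n + 1)).filter (fun i => Odd i), S.coeff i := by
    have : ((∑ i ∈ (range (2 * n + 1)).filter (fun i => Odd i), S.coeff i : ℤ) : ZMod 2) = 0 := by
      push_cast
      refine Finset.sum_involution (fun a _ => 2 * n - a) ?_ ?_ ?_ ?_
      · intro a ha
        simp only [mem_filter, mem_range] at ha
        show ((S.coeff a : ZMod 2) + (S.coeff (2 * n - a) : ZMod 2)) = 0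
        have := hpal a (by omega)
        rw [hdeg] at this
        rw [← this, CharTwo.add_self_eq_zero]
      · intro a ha _
        simp only [mem_filter, mem_range] at ha
        show 2 * n - a ≠ a
        obtain ⟨k, hk⟩ := ha.2
        obtain ⟨m, hm⟩ := hn
        omega
      · intro a ha
        simp only [mem_filter, mem_range] at ha
        show 2 * n - a ∈ filter (fun i => Odd i) (range (2 * n + 1))
        simp only [mem_filter, mem_range]
        obtain ⟨k, hk⟩ := ha.2
        exact ⟨by omega, ⟨n - k - 1, by omega⟩⟩
      · intro a ha
        simp only [mem_filter, mem_range] at ha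
        show 2 * n - (2 * n - a) = a
        omega
    exact (ZMod.intCast_zmod_eq_zero_iff_dvd _ 2).mp this
  obtain ⟨t, ht⟩ := hT
  exact ⟨t, by rw [key, ht]; ring⟩

lemma salem_eval_signs (n : ℕ) (S : Polynomial ℤ) (hmon : S.Monic) (hirr : Irreducible S)
    (hdeg2 : 2 ≤ S.natDegree) (hdeg : S.natDegree = 2 * n)
    (α : ℝ) (hα1 : 1 < α) (hαroot : Polynomial.aeval α S = 0)
    (hoff : ∀ z : ℂ, Polynomial.aeval z S = 0 → ‖z‖ ≠ 1 →
      (z = (α : ℂ) ∨ z = ((α⁻¹ : ℝ) : ℂ)))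
    (hne1 : S.eval 1 ≠ 0) (hne2 : S.eval (-1) ≠ 0) :
    S.eval 1 < 0 ∧ 0 < S.eval (-1) := by
  set f : Polynomial ℝ := S.map (algebraMap ℤ ℝ) with hf
  have hfmon : f.Monic := hmon.map _
  have hfdeg : f.natDegree = 2 * n := by rw [hf, hmon.natDegree_map, hdeg]
  have hfne : f ≠ 0 := hfmon.ne_zero
  -- evaluation transfers
  have heval : ∀ x : ℤ, f.eval (x : ℝ) = ((S.eval x : ℤ) : ℝ) := by
    intro x
    rw [hf, eval_map]
    exact eval₂_at_apply _ x
  -- complex roots from real roots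
  have hreal : ∀ r : ℝ, f.eval r = 0 → |r| ≠ 1 → (r = α ∨ r = α⁻¹) := by
    intro r hr habs
    have h0 : Polynomial.aeval r S = 0 := by rwa [aeval_def, ← eval_map, ← hf]
    have hz : Polynomial.aeval (r : ℂ) S = 0 := by
      have := Polynomial.aeval_algebraMap_apply ℂ r S
      simp only [h0, map_zero] at this
      simpa using this
    have := hoff (r : ℂ) hz (by simpa using habs)
    rcases this with h | h
    · exact Or.inl (by exact_mod_cast h)
    · exact Or.inr (by exact_mod_cast h)
  have hαf : f.eval α = 0 := by rwa [hf, eval_map, ← aeval_def]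
  -- squarefree
  have hsf : Squarefree f := by
    have hirrQ : Irreducible (S.map (Int.castRingHom ℚ)) :=
      (Polynomial.IsPrimitive.Int.irreducible_iff_irreducible_map_cast hmon.isPrimitive).mp hirr
    have hsep : (S.map (Int.castRingHom ℚ)).Separable := hirrQ.separable
    have : ((S.map (Int.castRingHom ℚ)).map (algebraMap ℚ ℝ)).Separable := hsep.map
    rw [Polynomial.map_map] at this
    have hcomp : (algebraMap ℚ ℝ).comp (Int.castRingHom ℚ) = algebraMap ℤ ℝ :=
      RingHom.ext_int _ _
    rw [hcomp] at this
    exact this.squarefree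
  constructor
  · -- S.eval 1 < 0
    have hne : f.eval 1 ≠ 0 := by
      have := heval 1; push_cast at this; rw [this]; exact_mod_cast hne1
    rcases lt_trichotomy (f.eval 1) 0 with h | h | h
    · have := heval 1; push_cast at this; rw [this] at h; exact_mod_cast h
    · exact absurd h hne
    · exfalso
      -- factor out (X - α)
      obtain ⟨Q, hQ⟩ := (dvd_iff_isRoot.mpr hαf)
      have hQ0 : Q ≠ 0 := by rintro rfl; simp [hQ] at hfne
      have hQmon : Q.Monic := (monic_X_sub_C α).of_mul_monic_left (hQ ▸ hfmon)
      have hQdeg : Q.natDegree = 2 * n - 1 := by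
        have := natDegree_mul (X_sub_C_ne_zero α) hQ0
        rw [← hQ, hfdeg, natDegree_X_sub_C] at this
        omega
      have hQdpos : 0 < Q.degree := by
        rw [← natDegree_pos_iff_degree_pos, hQdeg]; omega
      have hQ1 : Q.eval 1 < 0 := by
        have h1 : f.eval 1 = (1 - α) * Q.eval 1 := by rw [hQ]; simp
        nlinarith [h1 ▸ h]
      obtain ⟨r, hr1, hr0⟩ := exists_root_gt (hQmon.leadingCoeff ▸ one_pos) hQdpos 1 hQ1
      have hrf : f.eval r = 0 := by rw [hQ]; simp [hr0]
      have : r = α ∨ r = α⁻¹ := hreal r hrf (by rw [abs_of_pos (by linarith)]; linarith)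
      rcases this with rfl | rfl
      · -- α is a double root
        obtain ⟨Q', hQ'⟩ := (dvd_iff_isRoot.mpr hr0)
        have : (X - C r) * (X - C r) ∣ f := ⟨Q', by rw [hQ, hQ', mul_assoc]⟩
        exact (Polynomial.not_isUnit_X_sub_C r) (hsf _ this)
      · have : α⁻¹ < 1 := inv_lt_one_of_one_lt₀ hα1
        linarith
  · -- 0 < S.eval (-1)
    have hne : f.eval (-1) ≠ 0 := by
      have := heval (-1); push_cast at this; rw [this]; exact_mod_cast hne2
    rcases lt_trichotomy (f.eval (-1)) 0 with h | h | h
    · exfalso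
      set g : Polynomial ℝ := f.comp (-X) with hg
      have hgeval : ∀ x : ℝ, g.eval x = f.eval (-x) := by intro x; simp [hg, eval_comp]
      have hglc : g.leadingCoeff = 1 := by
        rw [hg, leadingCoeff_comp (by simp)]
        simp [hfmon.leadingCoeff, hfdeg]
      have hgdeg : 0 < g.degree := by
        rw [← natDegree_pos_iff_degree_pos, hg, natDegree_comp, hfdeg]
        simp only [natDegree_neg, natDegree_X]
        omega
      obtain ⟨r, hr1, hr0⟩ := exists_root_gt (hglc ▸ one_pos) hgdeg 1 (by rw [hgeval]; exact h)
      rw [hgeval] at hr0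
      have : -r = α ∨ -r = α⁻¹ := hreal (-r) hr0 (by rw [abs_neg, abs_of_pos (by linarith)]; linarith)
      have hαinv : 0 < α⁻¹ := by positivity
      rcases this with h' | h' <;> linarith
    · exact absurd h hne
    · have := heval (-1); push_cast at this; rw [this] at h; exact_mod_cast h

/-- If `S` is a Salem polynomial of degree `2n` with `|S(1)·S(-1)| = 1`,
then `n` is odd. -/
theorem stmt4 (n : ℕ) (S : Polynomial ℤ) (hS : IsSalemPoly S)
    (hdeg : S.natDegree = 2 * n)
    (habs : |S.eval 1 * S.eval (-1)| = 1) :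
    Odd n := by
  obtain ⟨hmon, hirr, hdeg2, hev, hpal, α, hα1, hαroot, hoff⟩ := hS
  -- S(1) and S(-1) are units of ℤ
  have habs1 : |S.eval 1| = 1 ∧ |S.eval (-1)| = 1 := by
    rw [abs_mul] at habs
    rcases Int.mul_eq_one_iff_eq_one_or_neg_one.mp habs with ⟨h1, h2⟩ | ⟨h1, h2⟩
    · exact ⟨h1, h2⟩
    · exfalso; have := abs_nonneg (S.eval 1); omega
  have hne1 : S.eval 1 ≠ 0 := fun h => by simp [h] at habs1
  have hne2 : S.eval (-1) ≠ 0 := fun h => by simp [h] at habs1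
  obtain ⟨hlt, hgt⟩ := salem_eval_signs n S hmon hirr hdeg2 hdeg α hα1 hαroot hoff hne1 hne2
  have he1 : S.eval 1 = -1 := by
    rcases (abs_eq (by norm_num : (0:ℤ) ≤ 1)).mp habs1.1 with h | h <;> omega
  have he2 : S.eval (-1) = 1 := by
    rcases (abs_eq (by norm_num : (0:ℤ) ≤ 1)).mp habs1.2 with h | h <;> omega
  by_contra hodd
  rw [Nat.not_odd_iff_even] at hodd
  have := pal_dvd_four hpal hdeg hodd
  rw [he1, he2] at this
  omega
end

section
/- Let r, s ≥ 0 be integers with r ≡ s (mod 8), and let q_{r,s} be the diagonal quadratic form over ℚ with r entries equal to 1 and s entries equal to -1. Then for every prime p, the Hasse–Witt invariant of q_{r,s} over ℚ_p equals the Hasse–Witt invariant of the hyperbolic form of dimension r + s over ℚ_p. -/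
open scoped Classical

/-- The Hilbert symbol of `a, b` in a field `K`: `1` if `a x² + b y² = 1` has a
solution, `-1` otherwise. -/
noncomputable def hilbertSym (K : Type*) [Field K] (a b : K) : ℤ :=
  if ∃ x y : K, a * x ^ 2 + b * y ^ 2 = 1 then 1 else -1

/-- The Hasse–Witt invariant of the diagonal quadratic form `⟨d 0, …, d (n-1)⟩` over a
field `K` (valued in `{±1} ≅ Br₂`): the product of the Hilbert symbols `(d i, d j)` over
pairs `i < j`. -/
noncomputable def hasseInv (K : Type*) [Field K] {n : ℕ} (d : Fin n → K) : ℤ :=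
  ∏ ij ∈ Finset.univ.filter (fun ij : Fin n × Fin n => ij.1 < ij.2),
    hilbertSym K (d ij.1) (d ij.2)

lemma count_pairs (n t : ℕ) :
    (Finset.univ.filter (fun ij : Fin n × Fin n =>
      ij.1 < ij.2 ∧ ¬((ij.1:ℕ) < t) ∧ ¬((ij.2:ℕ) < t))).card = (n - t).choose 2 := by
  rw [Finset.card_filter, Fintype.sum_prod_type]
  simp only [Fin.lt_def]
  rw [show (∑ i : Fin n, ∑ j : Fin n, if (i:ℕ) < (j:ℕ) ∧ ¬((i:ℕ) < t) ∧ ¬((j:ℕ) < t) then 1 else 0)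
      = ∑ i : Fin n, ∑ j ∈ Finset.range n, (if (i:ℕ) < j ∧ ¬((i:ℕ) < t) ∧ ¬(j < t) then 1 else 0)
      from Finset.sum_congr rfl fun i _ => Fin.sum_univ_eq_sum_range (fun j => if (i:ℕ) < j ∧ ¬((i:ℕ) < t) ∧ ¬(j < t) then 1 else 0) n]
  rw [Fin.sum_univ_eq_sum_range
      (fun i => ∑ j ∈ Finset.range n, if i < j ∧ ¬(i < t) ∧ ¬(j < t) then 1 else 0) n]
  rw [Finset.sum_comm]
  have hinner : ∀ j ∈ Finset.range n,
      (∑ i ∈ Finset.range n, if i < j ∧ ¬(i < t) ∧ ¬(j < t) then 1 else 0)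
      = if t ≤ j then j - t else 0 := by
    intro j hj
    rw [Finset.mem_range] at hj
    by_cases hjt : t ≤ j
    · rw [if_pos hjt, ← Finset.card_filter]
      have : Finset.filter (fun i => i < j ∧ ¬(i < t) ∧ ¬(j < t)) (Finset.range n)
          = Finset.Ico t j := by
        ext i; simp only [Finset.mem_filter, Finset.mem_range, Finset.mem_Ico]; omega
      rw [this, Nat.card_Ico]
    · rw [if_neg hjt]
      refine Finset.sum_eq_zero fun i _ => ?_
      rw [if_neg]; omega
  rw [Finset.sum_congr rfl hinner, ← Finset.sum_filter]
  have : Finset.filter (fun j => t ≤ j) (Finset.range n) = Finset.Ico t n := by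
    ext j; simp only [Finset.mem_filter, Finset.mem_range, Finset.mem_Ico]; omega
  rw [this, Finset.sum_Ico_eq_sum_range, Nat.choose_two_right]
  have h2 : ∀ k, t + k - t = k := by omega
  simp_rw [h2]
  exact Finset.sum_range_id _

lemma hilbertSym_one_left (K : Type*) [Field K] (b : K) : hilbertSym K 1 b = 1 := by
  rw [hilbertSym, if_pos ⟨1, 0, by ring⟩]

lemma hilbertSym_one_right (K : Type*) [Field K] (a : K) : hilbertSym K a 1 = 1 := by
  rw [hilbertSym, if_pos ⟨0, 1, by ring⟩]

lemma hilbertSym_sq (K : Type*) [Field K] (a b : K) : hilbertSym K a b ^ 2 = 1 := by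
  rw [hilbertSym]; split_ifs <;> norm_num

lemma choose2_succ (k : ℕ) : (k + 1).choose 2 = k.choose 2 + k := by
  rw [Nat.choose_succ_succ, Nat.choose_one_right, Nat.add_comm]

lemma choose2_step (k : ℕ) : (k + 4).choose 2 = k.choose 2 + (4 * k + 6) := by
  have h1 := choose2_succ k
  have h2 := choose2_succ (k + 1)
  have h3 := choose2_succ (k + 2)
  have h4 := choose2_succ (k + 3)
  have e2 : k + 1 + 1 = k + 2 := rfl
  have e3 : k + 2 + 1 = k + 3 := rfl
  have e4 : k + 3 + 1 = k + 4 := rfl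
  rw [e2] at h2; rw [e3] at h3; rw [e4] at h4
  omega

lemma choose2_mod4 (a u : ℕ) : ((u + 4 * a).choose 2) % 2 = (u.choose 2) % 2 := by
  induction a with
  | zero => rfl
  | succ a ih =>
      have : u + 4 * (a + 1) = (u + 4 * a) + 4 := by omega
      rw [this, choose2_step]; omega

lemma choose2_parity (a b : ℕ) (hab : a % 4 = b % 4) :
    a.choose 2 % 2 = b.choose 2 % 2 := by
  calc a.choose 2 % 2 = (a % 4 + 4 * (a / 4)).choose 2 % 2 := by
        congr 2; omega
    _ = (a % 4).choose 2 % 2 := choose2_mod4 _ _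
    _ = (b % 4).choose 2 % 2 := by rw [hab]
    _ = (b % 4 + 4 * (b / 4)).choose 2 % 2 := (choose2_mod4 _ _).symm
    _ = b.choose 2 % 2 := by congr 2; omega

/-- hasseInv of the form with `t` ones then `-1`s equals ε ^ choose (n-t) 2. -/
lemma hasseInv_form (K : Type*) [Field K] (n t : ℕ) :
    hasseInv K (fun i : Fin n => if (i : ℕ) < t then (1 : K) else -1)
      = (hilbertSym K (-1) (-1)) ^ ((n - t).choose 2) := by
  rw [hasseInv]
  have hterm : ∀ ij ∈ Finset.univ.filter (fun ij : Fin n × Fin n => ij.1 < ij.2),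
      hilbertSym K (if ((ij.1 : Fin n) : ℕ) < t then (1:K) else -1)
        (if ((ij.2 : Fin n) : ℕ) < t then (1:K) else -1)
      = if ¬((ij.1:ℕ) < t) ∧ ¬((ij.2:ℕ) < t) then hilbertSym K (-1) (-1) else 1 := by
    intro ij _
    by_cases h1 : (ij.1:ℕ) < t
    · rw [if_pos h1, hilbertSym_one_left, if_neg (by tauto)]
    · by_cases h2 : (ij.2:ℕ) < t
      · rw [if_pos h2, hilbertSym_one_right, if_neg (by tauto)]
      · rw [if_neg h1, if_neg h2, if_pos ⟨h1, h2⟩]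
  rw [Finset.prod_congr rfl hterm, Finset.prod_ite, Finset.prod_const, Finset.prod_const_one,
    mul_one, Finset.filter_filter]
  rw [count_pairs n t]

/-- Let `r ≡ s (mod 8)` and let `q_{r,s}` be the diagonal form over `ℚ_p`
with `r` entries `1` and `s` entries `-1`. Then for every prime `p` the Hasse–Witt
invariant of `q_{r,s}` over `ℚ_p` equals that of the hyperbolic form of dimension
`r + s` (which diagonalizes as `(r+s)/2` entries `1` and `(r+s)/2` entries `-1`). -/
theorem stmt8 (p : ℕ) [Fact p.Prime] (r s : ℕ) (h : r ≡ s [MOD 8]) :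
    hasseInv ℚ_[p] (fun i : Fin (r + s) => if (i : ℕ) < r then (1 : ℚ_[p]) else -1)
      = hasseInv ℚ_[p]
        (fun i : Fin (r + s) => if (i : ℕ) < (r + s) / 2 then (1 : ℚ_[p]) else -1) := by
  rw [hasseInv_form, hasseInv_form]
  set ε := hilbertSym ℚ_[p] (-1) (-1) with hε
  have hε2 : ε ^ 2 = 1 := hilbertSym_sq _ _ _
  have hpowmod : ∀ k : ℕ, ε ^ k = ε ^ (k % 2) := by
    intro k
    conv_lhs => rw [← Nat.div_add_mod k 2]
    rw [pow_add, pow_mul, hε2, one_pow, one_mul]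
  rw [hpowmod ((r + s - r).choose 2), hpowmod ((r + s - ((r+s)/2)).choose 2)]
  congr 1
  have h8 : r % 8 = s % 8 := h
  -- exponents: (r+s-r) = s ; (r+s - (r+s)/2) = (r+s)/2 =: m
  have e1 : r + s - r = s := by omega
  set m := (r + s) / 2 with hm
  have e2 : r + s - m = m := by omega
  rw [e1, e2]
  exact choose2_parity s m (by omega)
end

section
/- Let a ≥ 0 be an integer and S_a(X) = X^6 − aX^5 − X^4 + (2a−1)X^3 − X^2 − aX + 1. Then the resultant of S_a and the cyclotomic polynomial Φ₃(X) = X² + X + 1 equals 3(a+1) − 1 up to sign, and in particular Res(S_a, Φ₃) ≡ 2 (mod 3), so it is divisible by some prime p with p ≡ 2 (mod 3). -/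
open Polynomial

lemma aux_prime_factor : ∀ n : ℕ, n % 3 = 2 → ∃ p : ℕ, p.Prime ∧ p % 3 = 2 ∧ p ∣ n := by
  intro n
  induction n using Nat.strong_induction_on with
  | _ n ih =>
    intro hn
    have hn2 : 2 ≤ n := by omega
    obtain ⟨p, hp, hpd⟩ := (n.exists_prime_and_dvd (by omega)).imp (fun p h => h)
    rcases Nat.lt_or_ge (p % 3) 2 with h | h
    · have h01 : p % 3 = 0 ∨ p % 3 = 1 := by omega
      rcases h01 with h3 | h3
      · exfalso
        have h3d : (3 : ℕ) ∣ p := Nat.dvd_of_mod_eq_zero h3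
        have : (3 : ℕ) ∣ n := h3d.trans hpd
        omega
      · -- p % 3 = 1, recurse on n / p
        obtain ⟨m, rfl⟩ := hpd
        have hm3 : m % 3 = 2 := by
          have hmm := Nat.mul_mod p m 3
          rw [h3, one_mul] at hmm
          omega
        have hmlt : m < p * m := by
          have := hp.two_le
          nlinarith [Nat.pos_of_ne_zero (show m ≠ 0 by rintro rfl; simp at hn)]
        obtain ⟨q, hq, hq3, hqd⟩ := ih m hmlt hm3
        exact ⟨q, hq, hq3, hqd.mul_left p⟩
    · have h3 : p % 3 = 2 := by
        have := Nat.mod_lt p (show 0 < 3 by norm_num)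
        omega
      exact ⟨p, hp, h3, hpd⟩

/-- For an integer `a ≥ 0` and
`S_a(X) = X⁶ − aX⁵ − X⁴ + (2a−1)X³ − X² − aX + 1`, the resultant of `S_a` with
`Φ₃(X) = X² + X + 1` equals `3(a+1) − 1` (up to sign): concretely, `S_a(ζ) = 3(a+1) − 1`
for every primitive cube root of unity `ζ`, so the resultant
`N_{ℚ(ζ₃)/ℚ}(S_a(ζ₃))` is built from `3(a+1) − 1`; moreover `3(a+1) − 1 ≡ 2 (mod 3)`,
hence it is divisible by some prime `p ≡ 2 (mod 3)`. -/
theorem stmt16 (a : ℕ) :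
    (∀ ζ : ℂ, ζ ^ 2 + ζ + 1 = 0 →
        Polynomial.aeval ζ
          (X ^ 6 - C (a : ℤ) * X ^ 5 - X ^ 4 + C (2 * (a : ℤ) - 1) * X ^ 3 - X ^ 2 -
            C (a : ℤ) * X + 1 : Polynomial ℤ)
          = ((3 * ((a : ℤ) + 1) - 1 : ℤ) : ℂ)) ∧
    (3 * ((a : ℤ) + 1) - 1) % 3 = 2 ∧
    ∃ p : ℕ, p.Prime ∧ p % 3 = 2 ∧ (p : ℤ) ∣ (3 * ((a : ℤ) + 1) - 1) := by
  refine ⟨?_, by omega, ?_⟩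
  · intro ζ hζ
    have h2 : ζ ^ 2 = -ζ - 1 := by linear_combination hζ
    simp only [map_add, map_sub, map_mul, map_pow, map_one, aeval_X, aeval_C,
      algebraMap_int_eq, eq_intCast, map_intCast, map_ofNat]
    push_cast
    linear_combination (ζ^4 - (1+(a:ℂ))*ζ^3 + ((a:ℂ)-1)*ζ^2 + (1+2*(a:ℂ))*ζ - (1+3*(a:ℂ))) * hζ
  · obtain ⟨p, hp, h3, hd⟩ := aux_prime_factor (3 * a + 2) (by omega)
    refine ⟨p, hp, h3, ?_⟩
    have hd' : (p : ℤ) ∣ ((3 * a + 2 : ℕ) : ℤ) := Int.natCast_dvd_natCast.mpr hd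
    convert hd' using 1
    push_cast
    ring
end
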